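/- Let τ be a complex number with τ⁶ = 1/4, and let y satisfy y'' = −(y')²/y + y·(y⁴ + x) with y ≠ 0 on an open set U. Define ỹ(t) = τ · y(t/(2τ²))². Then ỹ satisfies the second Painlevé equation with zero parameter, ỹ''(t) = 2ỹ(t)³ + t·ỹ(t), at every t with t/(2τ²) ∈ U. -/

import Mathlib

/-- The explicit point transformation mapping y'' = -(y')²/y + y(y⁴+x) to the
second Painlevé equation with α = 0. -/
theorem explicit_equivalence_painleve2_zero (τ : ℂ) (hτ : τ ^ 6 = 1 / 4) (y : ℂ → ℂ)
    (U : Set ℂ) (hU : IsOpen U)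
    (hy1 : Differentiable ℂ y) (hy2 : Differentiable ℂ (deriv y))
    (hne : ∀ x ∈ U, y x ≠ 0)
    (hy : ∀ x ∈ U, deriv (deriv y) x = -(deriv y x) ^ 2 / y x + y x * ((y x) ^ 4 + x)) :
    ∀ t : ℂ, t / (2 * τ ^ 2) ∈ U →
      deriv (deriv (fun t => τ * (y (t / (2 * τ ^ 2))) ^ 2)) t
        = 2 * (τ * (y (t / (2 * τ ^ 2))) ^ 2) ^ 3 + t * (τ * (y (t / (2 * τ ^ 2))) ^ 2) := by
  have hτ0 : τ ≠ 0 := by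
    intro h; rw [h] at hτ; norm_num at hτ
  have hc : (2 * τ ^ 2) ≠ 0 := mul_ne_zero two_ne_zero (pow_ne_zero _ hτ0)
  intro t ht
  set c : ℂ := 1 / (2 * τ ^ 2) with hcdef
  have hinner : ∀ u : ℂ, HasDerivAt (fun s : ℂ => s / (2 * τ ^ 2)) c u := by
    intro u
    exact (hasDerivAt_id u).div_const (2 * τ ^ 2)
  have hYd : ∀ u : ℂ, HasDerivAt (fun s : ℂ => y (s / (2 * τ ^ 2)))
      (deriv y (u / (2 * τ ^ 2)) * c) u := by
    intro u
    exact ((hy1 _).hasDerivAt).comp u (hinner u)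
  have h1 : ∀ u : ℂ, HasDerivAt (fun s : ℂ => τ * (y (s / (2 * τ ^ 2))) ^ 2)
      (τ * (2 * y (u / (2 * τ ^ 2)) * (deriv y (u / (2 * τ ^ 2)) * c))) u := by
    intro u
    have := ((hYd u).pow 2).const_mul τ
    simpa [pow_one] using this
  have hd1 : deriv (fun s : ℂ => τ * (y (s / (2 * τ ^ 2))) ^ 2)
      = fun u => τ * (2 * y (u / (2 * τ ^ 2)) * (deriv y (u / (2 * τ ^ 2)) * c)) := by
    funext u; exact (h1 u).deriv
  rw [hd1]
  -- second derivative
  have hYd' : HasDerivAt (fun s : ℂ => deriv y (s / (2 * τ ^ 2)))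
      (deriv (deriv y) (t / (2 * τ ^ 2)) * c) t :=
    ((hy2 _).hasDerivAt).comp t (hinner t)
  have h2 : HasDerivAt (fun u => τ * (2 * y (u / (2 * τ ^ 2)) * (deriv y (u / (2 * τ ^ 2)) * c)))
      (τ * (2 * ((deriv y (t / (2 * τ ^ 2)) * c) * (deriv y (t / (2 * τ ^ 2)) * c)
        + y (t / (2 * τ ^ 2)) * (deriv (deriv y) (t / (2 * τ ^ 2)) * c * c)))) t := by
    have hm : HasDerivAt (fun u => y (u / (2 * τ ^ 2)) * (deriv y (u / (2 * τ ^ 2)) * c))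
        ((deriv y (t / (2 * τ ^ 2)) * c) * (deriv y (t / (2 * τ ^ 2)) * c)
          + y (t / (2 * τ ^ 2)) * (deriv (deriv y) (t / (2 * τ ^ 2)) * c * c)) t := by
      exact (hYd t).mul (hYd'.mul_const c)
    have := hm.const_mul (τ * 2)
    exact (this.congr_deriv (by ring)).congr_of_eventuallyEq
      (Filter.Eventually.of_forall fun u => by ring)
  rw [h2.deriv]
  set s : ℂ := t / (2 * τ ^ 2) with hs
  clear_value s
  have hys := hy s ht
  have hane := hne s ht
  have hts : t = s * (2 * τ ^ 2) := by rw [hs]; field_simp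
  rw [hys, hts]
  field_simp [hcdef]
  ring_nf
  have hc2 : c ^ 2 = τ ^ 2 := by
    rw [hcdef]; field_simp; linear_combination (-4 : ℂ) * hτ
  rw [hc2]; ring
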